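/- Let P be a forcing notion and κ an infinite cardinal. Then P is κ-descending distributive if and only if for every sequence (A_α)_{α<κ} of maximal antichains of P, the set of conditions q ∈ P for which there exists an unbounded set I ⊆ κ such that for all α ∈ I and all p ∈ A_α, if p is compatible with q then q ≤ p, is dense in P. -/

import Mathlib

universe u v

/-- A subset `D` of a forcing notion is *open dense* if it is downward closed and
for every condition `p` there is `q ∈ D` with `q ≤ p`. -/
def IsOpenDense {P : Type*} [Preorder P] (D : Set P) : Prop :=
  (∀ p ∈ D, ∀ q, q ≤ p → q ∈ D) ∧ ∀ p : P, ∃ q ∈ D, q ≤ p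

/-- A forcing notion `P` is `κ`-descending distributive if for every decreasing sequence
`(D_α)_{α<κ}` of open dense subsets, the intersection `⋂_{α<κ} D_α` is open dense. -/
def DescDist (P : Type*) [Preorder P] (κ : Cardinal) : Prop :=
  ∀ D : Ordinal → Set P,
    (∀ α, α < κ.ord → IsOpenDense (D α)) →
    (∀ α β : Ordinal, α ≤ β → β < κ.ord → D β ⊆ D α) →
    IsOpenDense (⋂ α ∈ Set.Iio κ.ord, D α)

/-- Two conditions are compatible if they have a common extension. -/
def Compat {P : Type*} [Preorder P] (p q : P) : Prop := ∃ r, r ≤ p ∧ r ≤ q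

/-- A maximal antichain: a set of pairwise incompatible conditions such that every
condition is compatible with some element of it. -/
def IsMaxAntichainForcing {P : Type*} [Preorder P] (A : Set P) : Prop :=
  (∀ p ∈ A, ∀ q ∈ A, p ≠ q → ¬ Compat p q) ∧ ∀ p : P, ∃ q ∈ A, Compat p q

/-- Every open dense set contains a maximal antichain. -/
lemma exists_maxAntichain_subset {P : Type*} [Preorder P] (D : Set P)
    (hD : IsOpenDense D) : ∃ A ⊆ D, IsMaxAntichainForcing A := by
  obtain ⟨m, hm⟩ := zorn_subset
    {A : Set P | A ⊆ D ∧ ∀ p ∈ A, ∀ q ∈ A, p ≠ q → ¬ Compat p q}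
    (by
      intro c hc hchain
      refine ⟨⋃₀ c, ⟨?_, ?_⟩, fun s hs => Set.subset_sUnion_of_mem hs⟩
      · intro x hx
        obtain ⟨s, hs, hxs⟩ := hx
        exact (hc hs).1 hxs
      · rintro p ⟨s, hs, hps⟩ q ⟨t, ht, hqt⟩ hpq
        rcases hchain.total hs ht with h | h
        · exact (hc ht).2 p (h hps) q hqt hpq
        · exact (hc hs).2 p hps q (h hqt) hpq)
  refine ⟨m, hm.prop.1, hm.prop.2, fun p => ?_⟩
  obtain ⟨q, hqD, hqp⟩ := hD.2 p
  by_contra h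
  push_neg at h
  have hqm : ∀ r ∈ m, ¬ Compat q r := by
    intro r hr ⟨s, hsq, hsr⟩
    exact h r hr ⟨s, hsq.trans hqp, hsr⟩
  have hqnm : q ∉ m := fun hq => hqm q hq ⟨q, le_refl q, le_refl q⟩
  have : insert q m ∈ {A : Set P | A ⊆ D ∧ ∀ p ∈ A, ∀ q ∈ A, p ≠ q → ¬ Compat p q} := by
    refine ⟨Set.insert_subset hqD hm.prop.1, ?_⟩
    rintro a (rfl | ha) b (rfl | hb) hab
    · exact absurd rfl hab
    · exact hqm b hb
    · intro ⟨s, hsa, hsb⟩; exact hqm a ha ⟨s, hsb, hsa⟩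
    · exact hm.prop.2 a ha b hb hab
  have := hm.eq_of_subset this (Set.subset_insert q m)
  exact hqnm (this ▸ Set.mem_insert q m)

/-- `P` is `κ`-descending distributive iff for every `κ`-sequence of maximal antichains
`(A_α)`, the set of `q` for which there is an unbounded `I ⊆ κ` such that for all `α ∈ I`
and `p ∈ A_α`, `p` compatible with `q` implies `q ≤ p`, is dense. -/
theorem statement5 {P : Type*} [PartialOrder P] [OrderTop P] (κ : Cardinal)
    (hκ : Cardinal.aleph0 ≤ κ) :
    DescDist P κ ↔
      ∀ A : Ordinal → Set P, (∀ α, α < κ.ord → IsMaxAntichainForcing (A α)) →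
        ∀ p : P, ∃ q ≤ p,
          ∃ I : Set Ordinal, I ⊆ Set.Iio κ.ord ∧
            (∀ β, β < κ.ord → ∃ α ∈ I, β ≤ α) ∧
            (∀ α ∈ I, ∀ r ∈ A α, Compat r q → q ≤ r) := by
  constructor
  · -- forward direction
    intro hdd A hA p
    set D : Ordinal → Set P :=
      fun β => {q | ∃ α, β ≤ α ∧ α < κ.ord ∧ ∃ r ∈ A α, q ≤ r} with hDdef
    have hOD : ∀ β, β < κ.ord → IsOpenDense (D β) := by
      intro β hβ
      constructor
      · rintro x ⟨α, hβα, hα, r, hr, hxr⟩ y hyx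
        exact ⟨α, hβα, hα, r, hr, hyx.trans hxr⟩
      · intro x
        obtain ⟨r, hr, s, hsx, hsr⟩ := (hA β hβ).2 x
        exact ⟨s, ⟨β, le_refl β, hβ, r, hr, hsr⟩, hsx⟩
    have hmono : ∀ α β : Ordinal, α ≤ β → β < κ.ord → D β ⊆ D α := by
      rintro α β hαβ hβ x ⟨γ, hβγ, hγ, hx⟩
      exact ⟨γ, hαβ.trans hβγ, hγ, hx⟩
    obtain ⟨q, hq, hqp⟩ := (hdd D hOD hmono).2 p
    have hq' : ∀ β, β < κ.ord → q ∈ D β := by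
      simpa using hq
    refine ⟨q, hqp, {α | α < κ.ord ∧ ∃ r ∈ A α, q ≤ r}, fun α hα => hα.1, ?_, ?_⟩
    · intro β hβ
      obtain ⟨α, hβα, hα, hr⟩ := hq' β hβ
      exact ⟨α, ⟨hα, hr⟩, hβα⟩
    · rintro α ⟨hα, r, hr, hqr⟩ r' hr' ⟨s, hsr', hsq⟩
      rcases eq_or_ne r' r with rfl | hne
      · exact hqr
      · exact absurd ⟨s, hsr', hsq.trans hqr⟩ ((hA α hα).1 r' hr' r hr hne)
  · -- backward direction
    intro h D hOD hmono
    constructor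
    · intro x hx y hyx
      simp only [Set.mem_iInter] at hx ⊢
      intro α hα
      exact (hOD α hα).1 x (hx α hα) y hyx
    · intro p
      classical
      set A : Ordinal → Set P := fun α =>
        if hα : α < κ.ord then (exists_maxAntichain_subset (D α) (hOD α hα)).choose
        else Set.univ with hAdef
      have hAspec : ∀ α (hα : α < κ.ord),
          A α ⊆ D α ∧ IsMaxAntichainForcing (A α) := by
        intro α hα
        have := (exists_maxAntichain_subset (D α) (hOD α hα)).choose_spec
        simpa [hAdef, hα] using this
      obtain ⟨q, hqp, I, hI, hIunb, hIq⟩ :=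
        h A (fun α hα => (hAspec α hα).2) p
      refine ⟨q, ?_, hqp⟩
      simp only [Set.mem_iInter]
      intro β hβ
      obtain ⟨α, hαI, hβα⟩ := hIunb β hβ
      have hα : α < κ.ord := hI hαI
      obtain ⟨r, hr, hcompat⟩ := (hAspec α hα).2.2 q
      have hqr : q ≤ r := hIq α hαI r hr
        (let ⟨s, hs1, hs2⟩ := hcompat; ⟨s, hs2, hs1⟩)
      have : q ∈ D α := (hOD α hα).1 r ((hAspec α hα).1 hr) q hqr
      exact hmono β α hβα hα this
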